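/- Let $n, n_c$ be positive integers. Let $M_b \in \mathbb{R}^{6\times 6}$ and $M_j \in \mathbb{R}^{n\times n}$ be invertible, and set $M := \mathrm{blockdiag}(M_b, M_j) \in \mathbb{R}^{(6+n)\times(6+n)}$, $B := \begin{bmatrix} 0_{6\times n} \\ 1_n\end{bmatrix}$, $J := [J_b \ J_j] \in \mathbb{R}^{6n_c \times (6+n)}$ with $J_b \in \mathbb{R}^{6n_c\times 6}$, $J_j \in \mathbb{R}^{6n_c\times n}$, and $\Lambda := J_j M_j^{-1}$. Suppose $\Lambda^\dagger \in \mathbb{R}^{n\times 6n_c}$ and $N_\Lambda \in \mathbb{R}^{n\times n}$ satisfy $\Lambda \Lambda^\dagger = 1_{6n_c}$ and $\Lambda N_\Lambda = 0$. Then for any vectors $h \in \mathbb{R}^{6+n}$, $f \in \mathbb{R}^{6n_c}$, $c \in \mathbb{R}^{6n_c}$, $\tau_0 \in \mathbb{R}^n$, setting $\tau := \Lambda^\dagger (J M^{-1}(h - J^\top f) - c) + N_\Lambda \tau_0$ and $\dot\nu := M^{-1}(B\tau + J^\top f - h)$, one has $J \dot\nu + c = 0$. -/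

import Mathlib

open Matrix

/-- the torque control law realizes contact wrenches while satisfying
the rigid contact acceleration constraint `J ν̇ + c = 0`. -/
theorem stmt_1 (n n_c : ℕ) (hn : 0 < n) (hnc : 0 < n_c)
    (Mb : Matrix (Fin 6) (Fin 6) ℝ) (Mj : Matrix (Fin n) (Fin n) ℝ)
    (hMb : IsUnit Mb.det) (hMj : IsUnit Mj.det)
    (Jb : Matrix (Fin (6 * n_c)) (Fin 6) ℝ)
    (Jj : Matrix (Fin (6 * n_c)) (Fin n) ℝ)
    (M : Matrix (Fin 6 ⊕ Fin n) (Fin 6 ⊕ Fin n) ℝ)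
    (hM : M = Matrix.fromBlocks Mb 0 0 Mj)
    (B : Matrix (Fin 6 ⊕ Fin n) (Fin n) ℝ)
    (hB : B = Matrix.fromRows (0 : Matrix (Fin 6) (Fin n) ℝ) (1 : Matrix (Fin n) (Fin n) ℝ))
    (J : Matrix (Fin (6 * n_c)) (Fin 6 ⊕ Fin n) ℝ)
    (hJ : J = Matrix.fromCols Jb Jj)
    (Λ : Matrix (Fin (6 * n_c)) (Fin n) ℝ) (hΛ : Λ = Jj * Mj⁻¹)
    (Λdag : Matrix (Fin n) (Fin (6 * n_c)) ℝ)
    (NΛ : Matrix (Fin n) (Fin n) ℝ)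
    (hΛdag : Λ * Λdag = 1) (hNΛ : Λ * NΛ = 0)
    (h : (Fin 6 ⊕ Fin n) → ℝ) (f : Fin (6 * n_c) → ℝ)
    (c : Fin (6 * n_c) → ℝ) (τ0 : Fin n → ℝ)
    (τ : Fin n → ℝ)
    (hτ : τ = Λdag *ᵥ (J *ᵥ (M⁻¹ *ᵥ (h - Jᵀ *ᵥ f)) - c) + NΛ *ᵥ τ0)
    (ν' : (Fin 6 ⊕ Fin n) → ℝ)
    (hν' : ν' = M⁻¹ *ᵥ (B *ᵥ τ + Jᵀ *ᵥ f - h)) :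
    J *ᵥ ν' + c = 0 := by
  have hMinv : M⁻¹ = Matrix.fromBlocks Mb⁻¹ 0 0 Mj⁻¹ := by
    apply Matrix.inv_eq_right_inv
    rw [hM, Matrix.fromBlocks_multiply]
    simp [Matrix.mul_nonsing_inv _ hMb, Matrix.mul_nonsing_inv _ hMj,
      Matrix.fromBlocks_one]
  have key : J * M⁻¹ * B = Λ := by
    rw [hJ, hMinv, hB, Matrix.fromCols_mul_fromBlocks, hΛ,
      Matrix.fromCols_mul_fromRows]
    simp
  set A := J * M⁻¹ with hA
  have hJM : ∀ x, J *ᵥ (M⁻¹ *ᵥ x) = A *ᵥ x := fun x => (Matrix.mulVec_mulVec x J M⁻¹).symm ▸ rfl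
  subst hν' hτ
  rw [hJM]
  have hAB : A *ᵥ (B *ᵥ (Λdag *ᵥ (J *ᵥ (M⁻¹ *ᵥ (h - Jᵀ *ᵥ f)) - c) + NΛ *ᵥ τ0))
      = A *ᵥ (h - Jᵀ *ᵥ f) - c := by
    rw [hJM]
    rw [Matrix.mulVec_mulVec, key, Matrix.mulVec_add, Matrix.mulVec_mulVec,
      Matrix.mulVec_mulVec, hΛdag, hNΛ, Matrix.one_mulVec, Matrix.zero_mulVec, add_zero]
  have expand : A *ᵥ (B *ᵥ (Λdag *ᵥ (J *ᵥ (M⁻¹ *ᵥ (h - Jᵀ *ᵥ f)) - c) + NΛ *ᵥ τ0) + Jᵀ *ᵥ f - h)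
      = A *ᵥ (B *ᵥ (Λdag *ᵥ (J *ᵥ (M⁻¹ *ᵥ (h - Jᵀ *ᵥ f)) - c) + NΛ *ᵥ τ0)) + A *ᵥ (Jᵀ *ᵥ f) - A *ᵥ h := by
    simp [Matrix.mulVec_add, Matrix.mulVec_sub]
  rw [expand, hAB, Matrix.mulVec_sub]
  abel
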